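/- Let H=(X,E) be a hypergraph with maximum degree Δ (every vertex belongs to at most Δ hyperedges) and let C ⊆ X with |C| = k. Then the number of distinct equivalence classes induced by C, i.e., |{e ∩ C : e ∈ E}|, is at most k(Δ+1)/2 + 1. -/

import Mathlib

/-- In a hypergraph of maximum degree `Δ`, a set `C` of `k` vertices induces at
most `k(Δ+1)/2 + 1` equivalence classes (stated multiplied by 2 to stay in ℕ). -/
theorem stmt_3 {α : Type*} [DecidableEq α] (X : Finset α) (E : Finset (Finset α))
    (hE : ∀ e ∈ E, e ⊆ X) (Δ : ℕ)
    (hdeg : ∀ x ∈ X, (E.filter (fun e => x ∈ e)).card ≤ Δ)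
    (C : Finset α) (hC : C ⊆ X) (k : ℕ) (hk : C.card = k) :
    2 * (E.image (fun e => e ∩ C)).card ≤ k * (Δ + 1) + 2 := by
  classical
  set F := E.image (fun e => e ∩ C) with hF
  have hwit : ∀ S ∈ F, ∃ e, e ∈ E ∧ e ∩ C = S := by
    intro S hS
    simpa [hF, Finset.mem_image] using hS
  choose! w hw1 hw2 using hwit
  have hsub : ∀ S ∈ F, S ⊆ C := by
    intro S hS
    rw [← hw2 S hS]; exact Finset.inter_subset_right
  set F' := F.erase ∅ with hF'
  have hcard : F.card ≤ F'.card + 1 := by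
    by_cases h : ∅ ∈ F
    · rw [hF', Finset.card_erase_of_mem h]; omega
    · rw [hF', Finset.erase_eq_of_notMem h]; omega
  have hsum : ∑ S ∈ F', S.card ≤ k * Δ := by
    calc ∑ S ∈ F', S.card
        = ∑ S ∈ F', ∑ x ∈ C, (if x ∈ S then 1 else 0) := by
          apply Finset.sum_congr rfl
          intro S hS
          have h1 : C.filter (· ∈ S) = S := by
            rw [Finset.filter_mem_eq_inter,
              Finset.inter_eq_right.mpr (hsub S (Finset.mem_of_mem_erase hS))]
          rw [← Finset.card_filter, h1]
      _ = ∑ x ∈ C, ∑ S ∈ F', (if x ∈ S then 1 else 0) := Finset.sum_comm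
      _ = ∑ x ∈ C, (F'.filter (fun S => x ∈ S)).card := by
          apply Finset.sum_congr rfl
          intro x _
          rw [Finset.card_filter]
      _ ≤ ∑ _x ∈ C, Δ := by
          apply Finset.sum_le_sum
          intro x hx
          have hinj : (F'.filter (fun S => x ∈ S)).card
              ≤ (E.filter (fun e => x ∈ e)).card := by
            apply Finset.card_le_card_of_injOn (fun S => w S)
            · intro S hS
              simp only [Finset.mem_coe, Finset.mem_filter] at hS ⊢
              have hSF : S ∈ F := Finset.mem_of_mem_erase hS.1
              have hx' : x ∈ w S ∩ C := by rw [hw2 S hSF]; exact hS.2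
              exact ⟨hw1 S hSF, (Finset.mem_inter.mp hx').1⟩
            · intro S₁ h₁ S₂ h₂ heq
              simp only [Finset.coe_filter, Set.mem_setOf_eq] at h₁ h₂
              have hS₁ : S₁ ∈ F := Finset.mem_of_mem_erase h₁.1
              have hS₂ : S₂ ∈ F := Finset.mem_of_mem_erase h₂.1
              rw [← hw2 S₁ hS₁, ← hw2 S₂ hS₂]
              exact congrArg (· ∩ C) heq
          exact hinj.trans (hdeg x (hC hx))
      _ = k * Δ := by rw [Finset.sum_const, hk, smul_eq_mul]
  set F₁ := F'.filter (fun S => S.card = 1) with hF₁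
  set F₂ := F'.filter (fun S => ¬ S.card = 1) with hF₂
  have hsplitc : F₁.card + F₂.card = F'.card :=
    Finset.card_filter_add_card_filter_not _
  have hsplits : ∑ S ∈ F', S.card = ∑ S ∈ F₁, S.card + ∑ S ∈ F₂, S.card :=
    (Finset.sum_filter_add_sum_filter_not _ _ _).symm
  have hsum1 : ∑ S ∈ F₁, S.card = F₁.card := by
    rw [Finset.card_eq_sum_ones F₁]
    apply Finset.sum_congr rfl
    intro S hS
    exact (Finset.mem_filter.mp hS).2
  have hsum2 : 2 * F₂.card ≤ ∑ S ∈ F₂, S.card := by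
    have h2 : 2 * F₂.card = ∑ _S ∈ F₂, 2 := by
      rw [Finset.sum_const, smul_eq_mul, mul_comm]
    rw [h2]
    apply Finset.sum_le_sum
    intro S hS
    simp only [hF₂, Finset.mem_filter] at hS
    have hne : S ≠ ∅ := Finset.ne_of_mem_erase hS.1
    have h1 : 1 ≤ S.card := Finset.card_pos.mpr (Finset.nonempty_iff_ne_empty.mpr hne)
    omega
  have hF₁k : F₁.card ≤ k := by
    have : F₁ ⊆ C.image (fun x => {x}) := by
      intro S hS
      simp only [hF₁, Finset.mem_filter] at hS
      obtain ⟨x, hx⟩ := Finset.card_eq_one.mp hS.2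
      have hxC : x ∈ C := hsub S (Finset.mem_of_mem_erase hS.1) (by simp [hx])
      exact Finset.mem_image.mpr ⟨x, hxC, hx.symm⟩
    calc F₁.card ≤ (C.image (fun x => {x})).card := Finset.card_le_card this
      _ ≤ C.card := Finset.card_image_le
      _ = k := hk
  have hmul : k * (Δ + 1) = k * Δ + k := by ring
  omega
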